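/- arXiv:1307.1223 — 3 statements merged into one kernel-verified Lean document; each statement's English description precedes it below -/
import Mathlib

section
/- Stability of normalization in L¹: let a < b be real numbers and let f, g : ℝ → ℝ be integrable and nonnegative on [a,b], with ∫_a^b f(s) ds = 1 and s := ∫_a^b g(t) dt > 0. Then ∫_a^b | g(t)/s − f(t) | dt ≤ 2 ∫_a^b | g(t) − f(t) | dt. -/
open MeasureTheory intervalIntegral Set

theorem normalization_stability_L1
    (a b : ℝ) (hab : a < b) (f g : ℝ → ℝ)
    (hf : IntervalIntegrable f volume a b)
    (hg : IntervalIntegrable g volume a b)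
    (hf0 : ∀ t ∈ Set.Icc a b, 0 ≤ f t)
    (hg0 : ∀ t ∈ Set.Icc a b, 0 ≤ g t)
    (hfint : ∫ s in a..b, f s = 1)
    (s : ℝ) (hs : s = ∫ t in a..b, g t) (hspos : 0 < s) :
    (∫ t in a..b, |g t / s - f t|) ≤ 2 * ∫ t in a..b, |g t - f t| := by
  have hab' : a ≤ b := hab.le
  have hgs : IntervalIntegrable (fun t => g t / s) volume a b := hg.div_const s
  have hA : IntervalIntegrable (fun t => |g t / s - g t|) volume a b := (hgs.sub hg).abs
  have hB : IntervalIntegrable (fun t => |g t - f t|) volume a b := (hg.sub hf).abs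
  have step1 : (∫ t in a..b, |g t / s - f t|) ≤
      (∫ t in a..b, |g t / s - g t|) + ∫ t in a..b, |g t - f t| := by
    rw [← intervalIntegral.integral_add hA hB]
    apply intervalIntegral.integral_mono_on hab' ((hgs.sub hf).abs) (hA.add hB)
    intro t _
    calc |g t / s - f t| = |(g t / s - g t) + (g t - f t)| := by ring_nf
    _ ≤ |g t / s - g t| + |g t - f t| := abs_add_le _ _
  have step2 : (∫ t in a..b, |g t / s - g t|) = |1 - s| := by
    have hcong : (∫ t in a..b, |g t / s - g t|) = ∫ t in a..b, |1/s - 1| * g t := by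
      apply intervalIntegral.integral_congr
      intro t ht
      rw [Set.uIcc_of_le hab'] at ht
      have hgt := hg0 t ht
      show |g t / s - g t| = |1/s - 1| * g t
      rw [show g t / s - g t = (1/s - 1) * g t by ring, abs_mul, abs_of_nonneg hgt]
    rw [hcong, intervalIntegral.integral_const_mul, ← hs]
    rw [show (1/s - 1) = (1-s)/s by field_simp, abs_div, abs_of_pos hspos,
      div_mul_cancel₀ _ hspos.ne']
  have step3 : |1 - s| ≤ ∫ t in a..b, |g t - f t| := by
    have h1s : 1 - s = ∫ t in a..b, (f t - g t) := by
      rw [intervalIntegral.integral_sub hf hg, hfint, hs]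
    rw [h1s]
    calc |∫ t in a..b, (f t - g t)| ≤ ∫ t in a..b, |f t - g t| :=
          intervalIntegral.abs_integral_le_integral_abs hab'
    _ = ∫ t in a..b, |g t - f t| := by
          apply intervalIntegral.integral_congr
          intro t _; exact abs_sub_comm _ _
  linarith
end

section
/- Correctness of two-dimensional inverse transform sampling: let a < b and c < d be real numbers, let f : ℝ × ℝ → ℝ be continuous on R = [a,b] × [c,d] with f > 0 on R and ∬_R f = 1. Let f₁(x) = ∫_c^d f(x,y) dy, let F_X(x) = ∫_a^x f₁(s) ds, and let G(x,y) = (∫_c^y f(x,t) dt)/f₁(x). Define Φ : [0,1] × [0,1] → R by Φ(u,v) = (x_u, y_{u,v}), where x_u ∈ [a,b] is the unique solution of F_X(x_u) = u and y_{u,v} ∈ [c,d] is the unique solution of G(x_u, y_{u,v}) = v. Then the pushforward under Φ of the uniform (Lebesgue) probability measure on the unit square [0,1] × [0,1] equals the probability measure on R with density f with respect to two-dimensional Lebesgue measure. -/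
open MeasureTheory intervalIntegral Set

private lemma inv_contOn {ψ φ : ℝ × ℝ → ℝ × ℝ} {K : Set (ℝ × ℝ)}
    (hK : IsCompact K) (hψ : ContinuousOn ψ K) (hφψ : ∀ p ∈ K, φ (ψ p) = p) :
    ContinuousOn φ (ψ '' K) := by
  rw [continuousOn_iff_isClosed]
  intro t ht
  refine ⟨ψ '' (K ∩ t), (((hK.inter_right ht).image_of_continuousOn
    (hψ.mono inter_subset_left)).isClosed), ?_⟩
  ext y
  constructor
  · rintro ⟨hyt, x, hx, rfl⟩
    exact ⟨⟨x, ⟨hx, by rwa [mem_preimage, hφψ x hx] at hyt⟩, rfl⟩, ⟨x, hx, rfl⟩⟩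
  · rintro ⟨⟨x, ⟨hxK, hxt⟩, rfl⟩, hy⟩
    exact ⟨by rw [mem_preimage, hφψ x hxK]; exact hxt, hy⟩

private lemma ext_Iic (μ ν : Measure (ℝ × ℝ)) [IsFiniteMeasure μ] [IsFiniteMeasure ν]
    (huniv : μ univ = ν univ)
    (h : ∀ u v : ℝ, μ (Iic u ×ˢ Iic v) = ν (Iic u ×ˢ Iic v)) : μ = ν := by
  have hspan : IsCountablySpanning (range (Iic : ℝ → Set ℝ)) := by
    refine ⟨fun n => Iic (n : ℝ), fun n => mem_range_self _, ?_⟩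
    ext x
    simp only [mem_iUnion, mem_Iic, mem_univ, iff_true]
    exact exists_nat_ge x
  have h1 : (inferInstance : MeasurableSpace ℝ) = .generateFrom (range Iic) := by
    rw [BorelSpace.measurable_eq (α := ℝ)]
    exact borel_eq_generateFrom_Iic ℝ
  have hgen : (inferInstance : MeasurableSpace (ℝ × ℝ)) =
      .generateFrom (image2 (· ×ˢ ·) (range Iic) (range Iic)) := by
    have := generateFrom_prod_eq hspan hspan
    rw [← h1] at this
    exact this.symm ▸ rfl
  refine ext_of_generate_finite _ hgen (isPiSystem_Iic.prod isPiSystem_Iic) ?_ huniv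
  rintro s ⟨_, ⟨u, rfl⟩, _, ⟨v, rfl⟩, rfl⟩
  exact h u v

theorem inverse_transform_sampling_correct_2d
    (a b c d : ℝ) (hab : a < b) (hcd : c < d) (f : ℝ × ℝ → ℝ)
    (hf : ContinuousOn f (Set.Icc a b ×ˢ Set.Icc c d))
    (hpos : ∀ p ∈ Set.Icc a b ×ˢ Set.Icc c d, 0 < f p)
    (hint : ∫ p in Set.Icc a b ×ˢ Set.Icc c d, f p = 1)
    (f₁ : ℝ → ℝ) (hf₁ : ∀ x, f₁ x = ∫ y in c..d, f (x, y))
    (FX : ℝ → ℝ) (hFX : ∀ x, FX x = ∫ s in a..x, f₁ s)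
    (G : ℝ → ℝ → ℝ) (hG : ∀ x y, G x y = (∫ t in c..y, f (x, t)) / f₁ x)
    (Φ : ℝ × ℝ → ℝ × ℝ)
    (hΦ : ∀ u v : ℝ, (u, v) ∈ Set.Icc (0:ℝ) 1 ×ˢ Set.Icc (0:ℝ) 1 →
      Φ (u, v) ∈ Set.Icc a b ×ˢ Set.Icc c d ∧
        FX (Φ (u, v)).1 = u ∧ G (Φ (u, v)).1 (Φ (u, v)).2 = v) :
    Measure.map Φ ((volume : Measure (ℝ × ℝ)).restrict
        (Set.Icc (0:ℝ) 1 ×ˢ Set.Icc (0:ℝ) 1)) =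
      ((volume : Measure (ℝ × ℝ)).restrict
        (Set.Icc a b ×ˢ Set.Icc c d)).withDensity
          (fun p => ENNReal.ofReal (f p)) := by
  set R : Set (ℝ × ℝ) := Set.Icc a b ×ˢ Set.Icc c d with hRdef
  set S : Set (ℝ × ℝ) := Set.Icc (0:ℝ) 1 ×ˢ Set.Icc (0:ℝ) 1 with hSdef
  have hRmeas : MeasurableSet R := (measurableSet_Icc.prod measurableSet_Icc)
  have hSmeas : MeasurableSet S := (measurableSet_Icc.prod measurableSet_Icc)
  have hRcomp : IsCompact R := isCompact_Icc.prod isCompact_Icc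
  -- clamping maps
  set pa : ℝ → ℝ := fun x => max a (min b x) with hpadef
  set pc : ℝ → ℝ := fun y => max c (min d y) with hpcdef
  have hpamem : ∀ x, pa x ∈ Set.Icc a b :=
    fun x => ⟨le_max_left _ _, max_le hab.le (min_le_left _ _)⟩
  have hpcmem : ∀ y, pc y ∈ Set.Icc c d :=
    fun y => ⟨le_max_left _ _, max_le hcd.le (min_le_left _ _)⟩
  have hpaid : ∀ x ∈ Set.Icc a b, pa x = x := by
    intro x hx
    simp only [hpadef]
    rw [min_eq_right hx.2, max_eq_right hx.1]
  have hpcid : ∀ y ∈ Set.Icc c d, pc y = y := by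
    intro y hy
    simp only [hpcdef]
    rw [min_eq_right hy.2, max_eq_right hy.1]
  have hpac : Continuous pa := continuous_const.max (continuous_const.min continuous_id)
  have hpcc : Continuous pc := continuous_const.max (continuous_const.min continuous_id)
  -- the globally continuous version of f
  set g : ℝ → ℝ → ℝ := fun x y => f (pa x, pc y) with hgdef
  have hgc : Continuous (Function.uncurry g) := by
    apply hf.comp_continuous
    · exact (hpac.comp continuous_fst).prodMk (hpcc.comp continuous_snd)
    · exact fun p => ⟨hpamem p.1, hpcmem p.2⟩
  have hgcx : ∀ x, Continuous fun y => g x y := fun x => hgc.comp (Continuous.prodMk_right x)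
  have hgpos : ∀ x y, 0 < g x y := fun x y => hpos _ ⟨hpamem x, hpcmem y⟩
  have hgeq : ∀ x ∈ Set.Icc a b, ∀ y ∈ Set.Icc c d, g x y = f (x, y) := by
    intro x hx y hy
    simp only [hgdef]
    rw [hpaid x hx, hpcid y hy]
  -- marginal density
  set f₁' : ℝ → ℝ := fun x => ∫ t in c..d, g x t with hf₁'def
  have hf₁'c : Continuous f₁' :=
    continuous_parametric_intervalIntegral_of_continuous' hgc c d
  have hf₁'pos : ∀ x, 0 < f₁' x := fun x =>
    intervalIntegral_pos_of_pos ((hgcx x).intervalIntegrable c d) (hgpos x) hcd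
  have hf₁eq : ∀ x ∈ Set.Icc a b, f₁ x = f₁' x := by
    intro x hx
    rw [hf₁]
    refine intervalIntegral.integral_congr fun t ht => ?_
    rw [uIcc_of_le hcd.le] at ht
    exact (hgeq x hx t ht).symm
  -- marginal CDF
  set FX' : ℝ → ℝ := fun x => ∫ s in a..x, f₁' s with hFX'def
  have hFX'c : Continuous FX' := by
    have : Continuous (Function.uncurry fun (_ : ℝ) t => f₁' t) :=
      hf₁'c.comp continuous_snd
    exact continuous_parametric_intervalIntegral_of_continuous this continuous_id
  have hFX'mono : StrictMono FX' := by
    intro x y hxy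
    have hsub : FX' y - FX' x = ∫ s in x..y, f₁' s :=
      integral_interval_sub_left (hf₁'c.intervalIntegrable a y) (hf₁'c.intervalIntegrable a x)
    have hpos' : 0 < ∫ s in x..y, f₁' s :=
      intervalIntegral_pos_of_pos (hf₁'c.intervalIntegrable x y) hf₁'pos hxy
    linarith
  have hFXeq : ∀ x ∈ Set.Icc a b, FX x = FX' x := by
    intro x hx
    rw [hFX]
    refine intervalIntegral.integral_congr fun s hs => ?_
    rw [uIcc_of_le hx.1] at hs
    exact hf₁eq s ⟨hs.1, hs.2.trans hx.2⟩
  have hFX'a : FX' a = 0 := intervalIntegral.integral_same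
  -- Fubini: total mass
  have hfi : IntegrableOn f R := hf.integrableOn_compact hRcomp
  have hrprod : (volume : Measure (ℝ × ℝ)).restrict R
      = (volume.restrict (Set.Icc a b)).prod (volume.restrict (Set.Icc c d)) := by
    rw [hRdef, Measure.volume_eq_prod, Measure.prod_restrict]
  have hFX'b : FX' b = 1 := by
    have hfi2 : Integrable f ((volume : Measure (ℝ × ℝ)).restrict R) := hfi
    have h1 : ∫ p in R, f p = ∫ x in Set.Icc a b, ∫ y in Set.Icc c d, f (x, y) := by
      rw [hrprod] at hfi2 ⊢
      exact MeasureTheory.integral_prod f hfi2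
    have h2 : ∫ x in Set.Icc a b, ∫ y in Set.Icc c d, f (x, y)
        = ∫ x in Set.Icc a b, f₁' x := by
      refine setIntegral_congr_fun measurableSet_Icc fun x hx => ?_
      rw [integral_Icc_eq_integral_Ioc, ← intervalIntegral.integral_of_le hcd.le,
        ← hf₁ x, hf₁eq x hx]
    have h3 : FX' b = ∫ x in Set.Icc a b, f₁' x := by
      rw [show FX' b = ∫ s in a..b, f₁' s from rfl,
        intervalIntegral.integral_of_le hab.le, ← integral_Icc_eq_integral_Ioc]
    rw [h1, h2, ← h3] at hint
    exact hint
  have hFX'range : ∀ x ∈ Set.Icc a b, FX' x ∈ Set.Icc (0:ℝ) 1 := by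
    intro x hx
    constructor
    · rw [← hFX'a]; exact hFX'mono.monotone hx.1
    · rw [← hFX'b]; exact hFX'mono.monotone hx.2
  -- conditional CDF
  set N : ℝ → ℝ → ℝ := fun x y => ∫ t in c..y, g x t with hNdef
  have hNc : Continuous fun p : ℝ × ℝ => N p.1 p.2 :=
    continuous_parametric_primitive_of_continuous hgc
  set Gg : ℝ → ℝ → ℝ := fun x y => N x y / f₁' x with hGgdef
  have hGgc : Continuous fun p : ℝ × ℝ => Gg p.1 p.2 :=
    hNc.div (hf₁'c.comp continuous_fst) (fun p => (hf₁'pos p.1).ne')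
  have hGgmono : ∀ x, StrictMono (Gg x) := by
    intro x y y' hyy'
    have hsub : N x y' - N x y = ∫ t in y..y', g x t :=
      integral_interval_sub_left ((hgcx x).intervalIntegrable c y')
        ((hgcx x).intervalIntegrable c y)
    have hpos' : 0 < ∫ t in y..y', g x t :=
      intervalIntegral_pos_of_pos ((hgcx x).intervalIntegrable y y') (hgpos x) hyy'
    have := hf₁'pos x
    simp only [hGgdef]
    rw [div_lt_div_iff_of_pos_right this]
    linarith
  have hGgc0 : ∀ x, Gg x c = 0 := by
    intro x
    simp only [hGgdef, hNdef, intervalIntegral.integral_same, zero_div]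
  have hGgd : ∀ x, Gg x d = 1 := by
    intro x
    simp only [hGgdef, hNdef]
    exact div_self (hf₁'pos x).ne'
  have hGgrange : ∀ x, ∀ y ∈ Set.Icc c d, Gg x y ∈ Set.Icc (0:ℝ) 1 := by
    intro x y hy
    constructor
    · rw [← hGgc0 x]; exact (hGgmono x).monotone hy.1
    · rw [← hGgd x]; exact (hGgmono x).monotone hy.2
  have hGeq : ∀ x ∈ Set.Icc a b, ∀ y ∈ Set.Icc c d, G x y = Gg x y := by
    intro x hx y hy
    rw [hG]
    simp only [hGgdef, hNdef]
    rw [hf₁eq x hx]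
    congr 1
    refine intervalIntegral.integral_congr fun t ht => ?_
    rw [uIcc_of_le hy.1] at ht
    exact (hgeq x hx t ⟨ht.1, ht.2.trans hy.2⟩).symm
  -- the forward map
  set Ψ : ℝ × ℝ → ℝ × ℝ := fun p => (FX' p.1, Gg p.1 p.2) with hΨdef
  have hΨc : Continuous Ψ := (hFX'c.comp continuous_fst).prodMk hGgc
  -- basic facts about Φ
  have hΦ' : ∀ p ∈ S, Φ p ∈ R ∧ FX' (Φ p).1 = p.1 ∧ Gg (Φ p).1 (Φ p).2 = p.2 := by
    rintro ⟨u, v⟩ hp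
    obtain ⟨hmem, h1, h2⟩ := hΦ u v hp
    refine ⟨hmem, ?_, ?_⟩
    · rw [← hFXeq _ hmem.1]; exact h1
    · rw [← hGeq _ hmem.1 _ hmem.2]; exact h2
  have hΨΦ : ∀ p ∈ S, Ψ (Φ p) = p := by
    intro p hp
    obtain ⟨_, h1, h2⟩ := hΦ' p hp
    simp only [hΨdef]
    rw [h1, h2]
  have hΨmemS : ∀ p ∈ R, Ψ p ∈ S := fun p hp =>
    ⟨hFX'range p.1 hp.1, hGgrange p.1 p.2 hp.2⟩
  have hΦΨ : ∀ p ∈ R, Φ (Ψ p) = p := by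
    rintro ⟨x, y⟩ hp
    obtain ⟨hmem, h1, h2⟩ := hΦ' _ (hΨmemS _ hp)
    have hx1 : (Φ (Ψ (x, y))).1 = x := hFX'mono.injective h1
    refine Prod.ext hx1 ?_
    rw [hx1] at h2
    exact (hGgmono x).injective h2
  have hSimg : Ψ '' R = S := by
    refine subset_antisymm ?_ ?_
    · rintro _ ⟨p, hp, rfl⟩; exact hΨmemS p hp
    · intro p hp
      exact ⟨Φ p, (hΦ' p hp).1, hΨΦ p hp⟩
  have hΦcont : ContinuousOn Φ S := hSimg ▸ inv_contOn hRcomp hΨc.continuousOn hΦΨ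
  have hΦaem : AEMeasurable Φ (volume.restrict S) := hΦcont.aemeasurable hSmeas
  -- the target measure
  set ν : Measure (ℝ × ℝ) :=
    ((volume : Measure (ℝ × ℝ)).restrict R).withDensity (fun p => ENNReal.ofReal (f p))
    with hνdef
  have hν_univ : ν univ = 1 := by
    rw [hνdef, withDensity_apply _ MeasurableSet.univ, Measure.restrict_univ,
      ← MeasureTheory.ofReal_integral_eq_lintegral_ofReal hfi
        (ae_restrict_of_forall_mem hRmeas fun p hp => (hpos p hp).le),
      hint, ENNReal.ofReal_one]
  haveI : IsFiniteMeasure ν := ⟨by rw [hν_univ]; exact ENNReal.one_lt_top⟩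
  haveI : IsFiniteMeasure ((volume : Measure (ℝ × ℝ)).restrict S) :=
    ⟨by rw [Measure.restrict_apply_univ]
        exact (isCompact_Icc.prod isCompact_Icc).measure_lt_top⟩
  -- the key claim : pushing ν forward by Ψ gives the uniform measure on S
  have hmain : Measure.map Ψ ν = volume.restrict S := by
    refine ext_Iic _ _ ?_ ?_
    · rw [Measure.map_apply hΨc.measurable MeasurableSet.univ, preimage_univ, hν_univ,
        Measure.restrict_apply_univ, hSdef, Measure.volume_eq_prod, Measure.prod_prod,
        Real.volume_Icc]
      norm_num
    intro u v
    have hrectmeas : MeasurableSet (Iic u ×ˢ Iic v : Set (ℝ × ℝ)) :=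
      measurableSet_Iic.prod measurableSet_Iic
    rw [Measure.map_apply hΨc.measurable hrectmeas, Measure.restrict_apply hrectmeas]
    set T : Set (ℝ × ℝ) := Ψ ⁻¹' (Iic u ×ˢ Iic v) with hTdef
    have hTmeas : MeasurableSet T := hΨc.measurable hrectmeas
    have hWmeas : MeasurableSet (T ∩ R) := hTmeas.inter hRmeas
    have hνT : ν T = ∫⁻ p in T ∩ R, ENNReal.ofReal (f p) ∂volume := by
      rw [hνdef, withDensity_apply _ hTmeas, Measure.restrict_restrict hTmeas]
    rw [hνT]
    rcases lt_or_ge u 0 with hu | hu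
    · have hT0 : T ∩ R = ∅ := by
        ext p
        simp only [mem_inter_iff, mem_empty_iff_false, iff_false, not_and]
        intro hT hR'
        have h1 : FX' p.1 ≤ u := hT.1
        have h2 := (hFX'range p.1 hR'.1).1
        linarith
      have hS0 : (Iic u ×ˢ Iic v) ∩ S = ∅ := by
        ext p
        simp only [mem_inter_iff, mem_empty_iff_false, iff_false, not_and]
        intro hT hS'
        have h1 : p.1 ≤ u := hT.1
        have h2 : (0:ℝ) ≤ p.1 := hS'.1.1
        linarith
      rw [hT0, hS0]
      simp
    rcases lt_or_ge v 0 with hv | hv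
    · have hT0 : T ∩ R = ∅ := by
        ext p
        simp only [mem_inter_iff, mem_empty_iff_false, iff_false, not_and]
        intro hT hR'
        have h1 : Gg p.1 p.2 ≤ v := hT.2
        have h2 := (hGgrange p.1 p.2 hR'.2).1
        linarith
      have hS0 : (Iic u ×ˢ Iic v) ∩ S = ∅ := by
        ext p
        simp only [mem_inter_iff, mem_empty_iff_false, iff_false, not_and]
        intro hT hS'
        have h1 : p.2 ≤ v := hT.2
        have h2 : (0:ℝ) ≤ p.2 := hS'.2.1
        linarith
      rw [hT0, hS0]
      simp
    -- main case : u ≥ 0, v ≥ 0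
    set u' : ℝ := min u 1 with hu'def
    set v' : ℝ := min v 1 with hv'def
    have hu'0 : 0 ≤ u' := le_min hu zero_le_one
    have hv'0 : 0 ≤ v' := le_min hv zero_le_one
    have hu'mem : u' ∈ Set.Icc (0:ℝ) 1 := ⟨hu'0, min_le_right _ _⟩
    have hv'mem : v' ∈ Set.Icc (0:ℝ) 1 := ⟨hv'0, min_le_right _ _⟩
    obtain ⟨hx₀R, hx₀FX, -⟩ := hΦ' (u', 0) ⟨hu'mem, le_rfl, zero_le_one⟩
    set x₀ : ℝ := (Φ (u', 0)).1 with hx₀def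
    have hx₀ab : x₀ ∈ Set.Icc a b := hx₀R.1
    have hτ : ∀ x ∈ Set.Icc a b, (Φ (FX' x, v')).1 = x ∧
        (Φ (FX' x, v')).2 ∈ Set.Icc c d ∧ Gg x ((Φ (FX' x, v')).2) = v' := by
      intro x hx
      obtain ⟨hR', h1, h2⟩ := hΦ' (FX' x, v') ⟨hFX'range x hx, hv'mem⟩
      have hx1 : (Φ (FX' x, v')).1 = x := hFX'mono.injective h1
      exact ⟨hx1, hR'.2, by rwa [hx1] at h2⟩
    have hTR : T ∩ R = {p : ℝ × ℝ | p.1 ∈ Set.Icc a x₀ ∧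
        p.2 ∈ Set.Icc c ((Φ (FX' p.1, v')).2)} := by
      ext ⟨x, y⟩
      simp only [mem_inter_iff, mem_setOf_eq]
      constructor
      · rintro ⟨hT, hxab, hycd⟩
        have hxu : FX' x ≤ u := hT.1
        have hyv : Gg x y ≤ v := hT.2
        have hxab' : x ∈ Set.Icc a b := hxab
        have hx1 : FX' x ≤ u' := le_min hxu (hFX'range x hxab').2
        have hy1 : Gg x y ≤ v' := le_min hyv (hGgrange x y hycd).2
        obtain ⟨hτ1, hτmem, hτGg⟩ := hτ x hxab'
        refine ⟨⟨hxab'.1, ?_⟩, hycd.1, ?_⟩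
        · exact hFX'mono.le_iff_le.mp (by rw [hx₀FX]; exact hx1)
        · exact (hGgmono x).le_iff_le.mp (by rw [hτGg]; exact hy1)
      · rintro ⟨hxI, hyI⟩
        have hxab : x ∈ Set.Icc a b := ⟨hxI.1, hxI.2.trans hx₀ab.2⟩
        obtain ⟨hτ1, hτmem, hτGg⟩ := hτ x hxab
        have hycd : y ∈ Set.Icc c d := ⟨hyI.1, hyI.2.trans hτmem.2⟩
        have hxu : FX' x ≤ u := by
          have := hFX'mono.monotone hxI.2
          rw [hx₀FX] at this
          exact this.trans (min_le_left _ _)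
        have hyv : Gg x y ≤ v := by
          have := (hGgmono x).monotone hyI.2
          rw [hτGg] at this
          exact this.trans (min_le_left _ _)
        exact ⟨⟨hxu, hyv⟩, hxab, hycd⟩
    have hcongr : ∫⁻ p in T ∩ R, ENNReal.ofReal (f p) ∂(volume : Measure (ℝ × ℝ))
        = ∫⁻ p in T ∩ R, ENNReal.ofReal (g p.1 p.2) ∂volume := by
      refine setLIntegral_congr_fun hWmeas fun p hp => ?_
      rw [hgeq p.1 hp.2.1 p.2 hp.2.2]
    have hGgm : Measurable fun p : ℝ × ℝ => ENNReal.ofReal (g p.1 p.2) :=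
      ENNReal.measurable_ofReal.comp hgc.measurable
    have key : ∫⁻ p in T ∩ R, ENNReal.ofReal (g p.1 p.2) ∂(volume : Measure (ℝ × ℝ))
        = ENNReal.ofReal (v' * u') := by
      rw [← lintegral_indicator hWmeas, Measure.volume_eq_prod,
        MeasureTheory.lintegral_prod _ ((hGgm.indicator hWmeas).aemeasurable)]
      have hinner : ∀ x : ℝ,
          (∫⁻ y, (T ∩ R).indicator (fun p => ENNReal.ofReal (g p.1 p.2)) (x, y) ∂volume)
          = (Set.Icc a x₀).indicator (fun x => ENNReal.ofReal (v' * f₁' x)) x := by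
        intro x
        by_cases hx : x ∈ Set.Icc a x₀
        · have hxab : x ∈ Set.Icc a b := ⟨hx.1, hx.2.trans hx₀ab.2⟩
          obtain ⟨hτ1, hτmem, hτGg⟩ := hτ x hxab
          have hct : c ≤ (Φ (FX' x, v')).2 := hτmem.1
          have hslice : ∀ y, (T ∩ R).indicator
              (fun p => ENNReal.ofReal (g p.1 p.2)) (x, y)
              = (Set.Icc c ((Φ (FX' x, v')).2)).indicator
                  (fun y => ENNReal.ofReal (g x y)) y := by
            intro y
            by_cases hy : y ∈ Set.Icc c ((Φ (FX' x, v')).2)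
            · rw [indicator_of_mem hy, indicator_of_mem]
              rw [hTR]
              exact ⟨hx, hy⟩
            · rw [indicator_of_notMem hy, indicator_of_notMem]
              rw [hTR]
              exact fun hmem => hy hmem.2
          rw [lintegral_congr hslice, lintegral_indicator measurableSet_Icc,
            indicator_of_mem hx,
            ← ofReal_integral_eq_lintegral_ofReal ((hgcx x).integrableOn_Icc)
              (ae_of_all _ fun y => (hgpos x y).le)]
          congr 1
          rw [integral_Icc_eq_integral_Ioc, ← intervalIntegral.integral_of_le hct]
          have hNt : N x ((Φ (FX' x, v')).2) = v' * f₁' x := by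
            have h := hτGg
            simp only [hGgdef] at h
            rw [div_eq_iff (hf₁'pos x).ne'] at h
            exact h
          exact hNt
        · rw [indicator_of_notMem hx]
          have hz : ∀ y, (T ∩ R).indicator
              (fun p => ENNReal.ofReal (g p.1 p.2)) (x, y) = 0 := by
            intro y
            refine indicator_of_notMem ?_ _
            rw [hTR]
            exact fun hmem => hx hmem.1
          rw [lintegral_congr hz, lintegral_zero]
      rw [lintegral_congr hinner, lintegral_indicator measurableSet_Icc,
        ← ofReal_integral_eq_lintegral_ofReal (f := fun x => v' * f₁' x)
          ((continuous_const.mul hf₁'c).integrableOn_Icc)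
          (ae_of_all _ fun x => mul_nonneg hv'0 (hf₁'pos x).le)]
      congr 1
      rw [integral_Icc_eq_integral_Ioc, ← intervalIntegral.integral_of_le hx₀ab.1,
        intervalIntegral.integral_const_mul,
        show (∫ s in a..x₀, f₁' s) = FX' x₀ from rfl, hx₀FX]
    rw [hcongr, key]
    have hRHS : (Iic u ×ˢ Iic v) ∩ S = Set.Icc 0 u' ×ˢ Set.Icc 0 v' := by
      rw [hSdef, prod_inter_prod]
      congr 1
      · ext z
        simp only [mem_inter_iff, mem_Iic, mem_Icc, hu'def, le_min_iff]
        constructor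
        · rintro ⟨h1, h2, h3⟩; exact ⟨h2, h1, h3⟩
        · rintro ⟨h1, h2, h3⟩; exact ⟨h2, h1, h3⟩
      · ext z
        simp only [mem_inter_iff, mem_Iic, mem_Icc, hv'def, le_min_iff]
        constructor
        · rintro ⟨h1, h2, h3⟩; exact ⟨h2, h1, h3⟩
        · rintro ⟨h1, h2, h3⟩; exact ⟨h2, h1, h3⟩
    rw [hRHS, Measure.volume_eq_prod, Measure.prod_prod, Real.volume_Icc, Real.volume_Icc,
      sub_zero, sub_zero, ENNReal.ofReal_mul hv'0, mul_comm]
  -- conclusion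
  calc Measure.map Φ (volume.restrict S)
      = Measure.map Φ (Measure.map Ψ ν) := by rw [hmain]
    _ = Measure.map (Φ ∘ Ψ) ν :=
        AEMeasurable.map_map_of_aemeasurable (hmain ▸ hΦaem) hΨc.measurable.aemeasurable
    _ = Measure.map id ν := by
        refine Measure.map_congr ?_
        have h0 : ∀ᵐ p ∂((volume : Measure (ℝ × ℝ)).restrict R), (Φ ∘ Ψ) p = id p :=
          ae_restrict_of_forall_mem hRmeas hΦΨ
        exact (withDensity_absolutelyContinuous _ _).ae_le h0
    _ = ν := Measure.map_id
end

section
/- Chebyshev coefficient formula from grid values: let n ≥ 1 be an integer, let α_0, …, α_n be real numbers, and let p : ℝ → ℝ be p(x) = Σ_{k=0}^n α_k T_k(x), where T_k is the degree-k Chebyshev polynomial of the first kind. Define weights w_0 = w_n = 1/2, w_j = 1 for 0 < j < n, and scaling constants c_0 = c_n = 2, c_k = 1 for 0 < k < n. Then for every integer k with 0 ≤ k ≤ n: α_k = (2/(n·c_k)) · Σ_{j=0}^{n} w_j · p(cos(jπ/n)) · cos(kjπ/n). -/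
open Real Finset Polynomial Polynomial.Chebyshev

-- geometric cosine sum
lemma cheb_geom_sum (n : ℕ) (hn : 1 ≤ n) (m : ℤ) :
    ∑ j ∈ Finset.range (2 * n), Real.cos (m * j * π / n) =
      if (2 * (n : ℤ)) ∣ m then (2 * n : ℝ) else 0 := by
  have hn0 : (n : ℝ) ≠ 0 := Nat.cast_ne_zero.mpr (by omega)
  set ζ : ℂ := Complex.exp ((m * π / n : ℝ) * Complex.I) with hζ
  have hpow : ∀ j : ℕ, ζ ^ j = Complex.exp ((m * j * π / n : ℝ) * Complex.I) := by
    intro j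
    rw [hζ, ← Complex.exp_nat_mul]
    congr 1
    push_cast
    ring
  have hre : ∀ j : ℕ, Real.cos (m * j * π / n) = (ζ ^ j).re := by
    intro j
    rw [hpow j, Complex.exp_ofReal_mul_I_re]
  have hsum : ∑ j ∈ Finset.range (2 * n), Real.cos (m * j * π / n) =
      (∑ j ∈ Finset.range (2 * n), ζ ^ j).re := by
    rw [Complex.re_sum]
    exact Finset.sum_congr rfl fun j _ => hre j
  rw [hsum]
  by_cases hdvd : (2 * (n : ℤ)) ∣ m
  · rw [if_pos hdvd]
    obtain ⟨t, ht⟩ := hdvd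
    have hζ1 : ζ = 1 := by
      rw [hζ, Complex.exp_eq_one_iff]
      refine ⟨t, ?_⟩
      have hnC : (n : ℂ) ≠ 0 := Nat.cast_ne_zero.mpr (by omega)
      have hm : (m : ℂ) = 2 * n * t := by exact_mod_cast ht
      push_cast
      rw [hm]
      field_simp
    rw [hζ1]
    simp
  · have hζne : ζ ≠ 1 := by
      intro h
      rw [hζ, Complex.exp_eq_one_iff] at h
      obtain ⟨t, ht⟩ := h
      have hI : ((m * π / n : ℝ) : ℂ) = ((t * (2 * π) : ℝ) : ℂ) := by
        have := mul_right_cancel₀ Complex.I_ne_zero (by rw [ht]; push_cast; ring :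
          ((m * π / n : ℝ) : ℂ) * Complex.I = ((t * (2 * π) : ℝ) : ℂ) * Complex.I)
        exact this
      have hR : (m : ℝ) * π / n = t * (2 * π) := by exact_mod_cast hI
      apply hdvd
      refine ⟨t, ?_⟩
      have hπ : (π : ℝ) ≠ 0 := Real.pi_ne_zero
      field_simp at hR
      have h2 : (m : ℝ) * π = ((2 * n * t : ℤ) : ℝ) * π := by push_cast; linear_combination π * hR
      have : (m : ℝ) = ((2 * n * t : ℤ) : ℝ) := mul_right_cancel₀ hπ h2
      exact_mod_cast this
    have hζpow : ζ ^ (2 * n) = 1 := by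
      rw [hpow (2 * n), Complex.exp_eq_one_iff]
      refine ⟨m, ?_⟩
      have hnC : (n : ℂ) ≠ 0 := Nat.cast_ne_zero.mpr (by omega)
      have : ((m * (2 * n : ℕ) * π / n : ℝ) : ℂ) = (m : ℂ) * (2 * π) := by
        push_cast
        field_simp
      rw [this]; ring
    rw [if_neg hdvd, geom_sum_eq hζne, hζpow]
    simp

-- weighted sum
lemma cheb_weighted_sum (n : ℕ) (hn : 1 ≤ n) (m : ℤ) :
    ∑ j ∈ Finset.range (n + 1),
        (if j = 0 ∨ j = n then (1 : ℝ)/2 else 1) * Real.cos (m * j * π / n) =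
      if (2 * (n : ℤ)) ∣ m then (n : ℝ) else 0 := by
  have hn0 : (n : ℝ) ≠ 0 := Nat.cast_ne_zero.mpr (by omega)
  set f : ℕ → ℝ := fun j => Real.cos (m * j * π / n) with hf
  have hLHS : ∑ j ∈ Finset.range (n + 1),
      (if j = 0 ∨ j = n then (1 : ℝ)/2 else 1) * f j =
      (∑ j ∈ Finset.range (n + 1), f j) - f 0 / 2 - f n / 2 := by
    have h1 : ∀ j ∈ Finset.range (n + 1),
        (if j = 0 ∨ j = n then (1 : ℝ)/2 else 1) * f j =
        f j - (if j = 0 then f j / 2 else 0) - (if j = n then f j / 2 else 0) := by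
      intro j _
      by_cases h0 : j = 0
      · subst h0
        have : ¬ (0 = n) := by omega
        simp [this]
        ring
      · by_cases hN : j = n
        · subst hN
          simp [h0]
          ring
        · simp [h0, hN]
    rw [Finset.sum_congr rfl h1]
    rw [Finset.sum_sub_distrib, Finset.sum_sub_distrib]
    congr 1
    · congr 1
      rw [Finset.sum_ite_eq' (Finset.range (n+1)) 0 (fun j => f j / 2)]
      simp
    · rw [Finset.sum_ite_eq' (Finset.range (n+1)) n (fun j => f j / 2)]
      simp
  have key : ∑ j ∈ Finset.range (2 * n), f j =
      2 * (∑ j ∈ Finset.range (n + 1), f j) - f 0 - f n := by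
    have hsplit : ∑ j ∈ Finset.range (2 * n), f j =
        ∑ j ∈ Finset.range n, f j + ∑ i ∈ Finset.range n, f (n + i) := by
      rw [two_mul, Finset.sum_range_add]
    have hrefl : ∑ i ∈ Finset.range n, f (n + i) =
        ∑ i ∈ Finset.range n, f (i + 1) := by
      rw [← Finset.sum_range_reflect (fun i => f (n + i)) n]
      refine Finset.sum_congr rfl fun i hi => ?_
      rw [Finset.mem_range] at hi
      show f (n + (n - 1 - i)) = f (i + 1)
      rw [hf]
      simp only
      have hcast : ((n + (n - 1 - i) : ℕ) : ℝ) = 2 * n - 1 - i := by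
        have : (n + (n - 1 - i) : ℕ) = 2 * n - (1 + i) := by omega
        rw [this]
        push_cast [Nat.cast_sub (by omega : 1 + i ≤ 2 * n)]
        ring
      rw [hcast]
      have harg : (m : ℝ) * (2 * n - 1 - i) * π / n =
          m * (2 * π) - m * (i + 1 : ℕ) * π / n := by
        push_cast
        field_simp
        ring
      rw [harg, Real.cos_int_mul_two_pi_sub]
    have h2 : ∑ i ∈ Finset.range n, f (i + 1) =
        (∑ j ∈ Finset.range (n + 1), f j) - f 0 := by
      rw [Finset.sum_range_succ' f n]
      ring
    have h3 : ∑ j ∈ Finset.range n, f j =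
        (∑ j ∈ Finset.range (n + 1), f j) - f n := by
      rw [Finset.sum_range_succ f n]
      ring
    rw [hsplit, hrefl, h2, h3]
    ring
  have hgeo := cheb_geom_sum n hn m
  rw [hLHS]
  by_cases hdvd : (2 * (n : ℤ)) ∣ m
  · rw [if_pos hdvd]
    rw [if_pos hdvd] at hgeo
    have hf0 : f 0 = 1 := by simp [hf]
    have hfn : f n = 1 := by
      rw [hf]
      simp only
      obtain ⟨t, ht⟩ := hdvd
      have : (m : ℝ) * n * π / n = ((n * t : ℤ) : ℝ) * (2 * π) := by
        have hm : (m : ℝ) = 2 * n * t := by exact_mod_cast ht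
        rw [hm]; push_cast; field_simp
      rw [this, Real.cos_int_mul_two_pi]
    have : ∑ j ∈ Finset.range (2 * n), f j = 2 * n := hgeo
    rw [key] at this
    rw [hf0, hfn] at this ⊢
    linarith
  · rw [if_neg hdvd]
    rw [if_neg hdvd] at hgeo
    have : ∑ j ∈ Finset.range (2 * n), f j = 0 := hgeo
    rw [key] at this
    -- also f 0 + f n relation: need (sum) - f0/2 - fn/2 = 0, i.e. 2*sum = f0 + fn
    linarith

-- orthogonality on the grid
lemma cheb_orth (n : ℕ) (hn : 1 ≤ n) (k l : ℕ) (hk : k ≤ n) (hl : l ≤ n) :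
    ∑ j ∈ Finset.range (n + 1),
        (if j = 0 ∨ j = n then (1 : ℝ)/2 else 1) *
          (Real.cos (l * j * π / n) * Real.cos (k * j * π / n)) =
      if l = k then (n : ℝ) * (if k = 0 ∨ k = n then 2 else 1) / 2 else 0 := by
  have hn0 : (n : ℝ) ≠ 0 := Nat.cast_ne_zero.mpr (by omega)
  have hprod : ∀ j : ℕ, Real.cos (l * j * π / n) * Real.cos (k * j * π / n) =
      (Real.cos (((l + k : ℤ) : ℝ) * j * π / n) +
        Real.cos (((l - k : ℤ) : ℝ) * j * π / n)) / 2 := by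
    intro j
    have e1 : ((l + k : ℤ) : ℝ) * j * π / n = (l * j * π / n) + (k * j * π / n) := by
      push_cast; ring
    have e2 : ((l - k : ℤ) : ℝ) * j * π / n = (l * j * π / n) - (k * j * π / n) := by
      push_cast; ring
    rw [e1, e2, Real.cos_add, Real.cos_sub]
    ring
  have hsplit : ∑ j ∈ Finset.range (n + 1),
      (if j = 0 ∨ j = n then (1 : ℝ)/2 else 1) *
        (Real.cos (l * j * π / n) * Real.cos (k * j * π / n)) =
      (∑ j ∈ Finset.range (n + 1), (if j = 0 ∨ j = n then (1 : ℝ)/2 else 1) *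
        Real.cos (((l + k : ℤ) : ℝ) * j * π / n)) / 2 +
      (∑ j ∈ Finset.range (n + 1), (if j = 0 ∨ j = n then (1 : ℝ)/2 else 1) *
        Real.cos (((l - k : ℤ) : ℝ) * j * π / n)) / 2 := by
    rw [Finset.sum_div, Finset.sum_div, ← Finset.sum_add_distrib]
    refine Finset.sum_congr rfl fun j _ => ?_
    rw [hprod j]
    ring
  rw [hsplit, cheb_weighted_sum n hn (l + k), cheb_weighted_sum n hn ((l : ℤ) - k)]
  by_cases hlk : l = k
  · subst hlk
    rw [if_pos rfl, if_pos (by simp : (2 * (n : ℤ)) ∣ ((l : ℤ) - l))]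
    by_cases hke : l = 0 ∨ l = n
    · rw [if_pos hke]
      have : (2 * (n : ℤ)) ∣ ((l : ℤ) + l) := by
        rcases hke with h | h <;> subst h
        · simp
        · exact ⟨1, by ring⟩
      rw [if_pos this]
      ring
    · rw [if_neg hke]
      have : ¬ (2 * (n : ℤ)) ∣ ((l : ℤ) + l) := by
        intro hd
        push_neg at hke
        have hpos : (0 : ℤ) < (l : ℤ) + l := by
          have : l ≠ 0 := hke.1
          omega
        have := Int.le_of_dvd hpos hd
        have hln : l ≠ n := hke.2
        omega
      rw [if_neg this]
      ring
  · rw [if_neg hlk]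
    have h2 : ¬ (2 * (n : ℤ)) ∣ ((l : ℤ) - k) := by
      intro hd
      have hne : ((l : ℤ) - k) ≠ 0 := by
        intro h; apply hlk; omega
      have habs : (2 * (n : ℤ)) ∣ |(l : ℤ) - k| := (dvd_abs _ _).mpr hd
      have := Int.le_of_dvd (abs_pos.mpr hne) habs
      have : |(l : ℤ) - k| ≤ n := by
        rw [abs_le]; omega
      omega
    have h1 : ¬ (2 * (n : ℤ)) ∣ ((l : ℤ) + k) := by
      intro hd
      rcases eq_or_ne ((l : ℤ) + k) 0 with h0 | h0
      · apply hlk; omega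
      · have hpos : (0 : ℤ) < (l : ℤ) + k := by omega
        have := Int.le_of_dvd hpos hd
        have : l = n ∧ k = n := by omega
        exact hlk (this.1.trans this.2.symm)
    rw [if_neg h1, if_neg h2]
    ring

theorem chebyshev_coefficients_from_grid_values
    (n : ℕ) (hn : 1 ≤ n) (α : ℕ → ℝ) (p : ℝ → ℝ)
    (hp : ∀ x : ℝ, p x = ∑ k ∈ Finset.range (n + 1), α k * (T ℝ k).eval x)
    (w : ℕ → ℝ) (hw : ∀ j ≤ n, w j = if j = 0 ∨ j = n then 1/2 else 1)
    (c : ℕ → ℝ) (hc : ∀ k ≤ n, c k = if k = 0 ∨ k = n then 2 else 1) :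
    ∀ k ≤ n,
      α k = (2 / (n * c k)) *
        ∑ j ∈ Finset.range (n + 1),
          w j * p (Real.cos (j * π / n)) * Real.cos (k * j * π / n) := by
  intro k hk
  have hn0 : (n : ℝ) ≠ 0 := Nat.cast_ne_zero.mpr (by omega)
  have hsum : ∑ j ∈ Finset.range (n + 1),
      w j * p (Real.cos (j * π / n)) * Real.cos (k * j * π / n) =
      ∑ l ∈ Finset.range (n + 1), α l *
        ∑ j ∈ Finset.range (n + 1),
          (if j = 0 ∨ j = n then (1 : ℝ)/2 else 1) *
            (Real.cos (l * j * π / n) * Real.cos (k * j * π / n)) := by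
    have step : ∀ j ∈ Finset.range (n + 1),
        w j * p (Real.cos (j * π / n)) * Real.cos (k * j * π / n) =
        ∑ l ∈ Finset.range (n + 1), α l *
          ((if j = 0 ∨ j = n then (1 : ℝ)/2 else 1) *
            (Real.cos (l * j * π / n) * Real.cos (k * j * π / n))) := by
      intro j hj
      rw [Finset.mem_range] at hj
      rw [hw j (by omega), hp]
      rw [Finset.mul_sum, Finset.sum_mul]
      refine Finset.sum_congr rfl fun l _ => ?_
      have hT : (T ℝ (l : ℤ)).eval (Real.cos (j * π / n)) =
          Real.cos (l * j * π / n) := by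
        rw [T_real_cos]
        congr 1
        push_cast
        ring
      rw [hT]
      ring
    rw [Finset.sum_congr rfl step, Finset.sum_comm]
    refine Finset.sum_congr rfl fun l _ => ?_
    rw [Finset.mul_sum]
  rw [hsum]
  have horth : ∀ l ∈ Finset.range (n + 1), α l *
      (∑ j ∈ Finset.range (n + 1),
        (if j = 0 ∨ j = n then (1 : ℝ)/2 else 1) *
          (Real.cos (l * j * π / n) * Real.cos (k * j * π / n))) =
      if l = k then α l * ((n : ℝ) * (if k = 0 ∨ k = n then 2 else 1) / 2) else 0 := by
    intro l hl
    rw [Finset.mem_range] at hl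
    rw [cheb_orth n hn k l hk (by omega)]
    split_ifs <;> ring
  rw [Finset.sum_congr rfl horth, Finset.sum_ite_eq' (Finset.range (n + 1)) k
    (fun l => α l * ((n : ℝ) * (if k = 0 ∨ k = n then 2 else 1) / 2))]
  rw [if_pos (Finset.mem_range.mpr (by omega))]
  rw [hc k hk]
  by_cases hke : k = 0 ∨ k = n
  · simp only [if_pos hke]
    field_simp
  · simp only [if_neg hke]
    field_simp
end
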